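/- arXiv:math/0007030 — 2 statements merged into one kernel-verified Lean document; each statement's English description precedes it below -/
import Mathlib

section
/- Let Z be a complex Gaussian random variable with mean zero and E|Z|^2 = 1, defined on a probability space (Ω, ν). Then for every measurable set E with ν(E) > 0, the integral ∫_E log|Z| dν is at most (ν(E)/2)·log(1/ν(E)). -/
open MeasureTheory Real

/-- Offord's upper bound (Jensen step): for a complex Gaussian random variable `Z`
with mean zero and `E|Z|² = 1`, for every measurable set `E` of positive measure,
`∫_E log|Z| dν ≤ (ν(E)/2) log(1/ν(E))`. -/
theorem stmt_0 {Ω : Type*} [MeasurableSpace Ω] (ν : Measure Ω) [IsProbabilityMeasure ν]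
    (Z : Ω → ℂ) (hZmeas : Measurable Z)
    (hmean : ∫ x, Z x ∂ν = 0)
    (hvar : ∫ x, ‖Z x‖ ^ 2 ∂ν = 1)
    (hlaw : ∀ s : ℝ, 0 ≤ s → ν {x | ‖Z x‖ ≤ s} = ENNReal.ofReal (1 - Real.exp (-s ^ 2)))
    (E : Set Ω) (hE : MeasurableSet E) (hEpos : 0 < ν E) :
    ∫ x in E, Real.log ‖Z x‖ ∂ν ≤ (ν E).toReal / 2 * Real.log (1 / (ν E).toReal) := by
  set p : ℝ := (ν E).toReal with hp
  have hple : ν E ≤ 1 := prob_le_one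
  have hppos : 0 < p := ENNReal.toReal_pos hEpos.ne'
    (ne_top_of_le_ne_top ENNReal.one_ne_top hple)
  have hp1 : p ≤ 1 := by
    have := ENNReal.toReal_mono ENNReal.one_ne_top hple
    simpa using this
  have hlogpos : 0 ≤ Real.log (1 / p) :=
    Real.log_nonneg (one_le_one_div hppos hp1)
  by_cases hint : IntegrableOn (fun x => Real.log ‖Z x‖) E ν
  · -- main case
    have hint2 : Integrable (fun x => ‖Z x‖ ^ 2) ν := by
      by_contra h
      rw [integral_undef h] at hvar
      norm_num at hvar
    -- a.e. positivity of ‖Z‖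
    have haepos : ∀ᵐ x ∂ν, 0 < ‖Z x‖ := by
      rw [ae_iff]
      refine measure_mono_null (fun x hx => ?_) (show ν {x | ‖Z x‖ ≤ 0} = 0 by
        rw [hlaw 0 le_rfl]; simp)
      simpa using not_lt.mp hx
    -- pointwise bound
    have hptwise : ∀ᵐ x ∂ν,
        Real.log ‖Z x‖ ≤ ((p / 2) * ‖Z x‖ ^ 2 + (Real.log (1 / p) - 1) / 2) := by
      filter_upwards [haepos] with x hx
      have ht2 : 0 < ‖Z x‖ ^ 2 := pow_pos hx 2
      have h1 : Real.log (p * ‖Z x‖ ^ 2) ≤ p * ‖Z x‖ ^ 2 - 1 :=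
        Real.log_le_sub_one_of_pos (mul_pos hppos ht2)
      rw [Real.log_mul hppos.ne' ht2.ne'] at h1
      have h2 : Real.log (‖Z x‖ ^ 2) = 2 * Real.log ‖Z x‖ := by
        rw [Real.log_pow]; push_cast; ring
      have h3 : Real.log (1 / p) = - Real.log p := by
        rw [one_div, Real.log_inv]
      rw [h2] at h1
      rw [h3]
      linarith
    have hintg : Integrable (fun x => (p / 2) * ‖Z x‖ ^ 2 + (Real.log (1 / p) - 1) / 2)
        (ν.restrict E) :=
      ((hint2.const_mul (p / 2)).restrict).add (integrable_const _)
    have step1 : ∫ x in E, Real.log ‖Z x‖ ∂ν ≤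
        ∫ x in E, ((p / 2) * ‖Z x‖ ^ 2 + (Real.log (1 / p) - 1) / 2) ∂ν :=
      integral_mono_ae hint hintg (ae_restrict_of_ae hptwise)
    have hcomp : ∫ x in E, ((p / 2) * ‖Z x‖ ^ 2 + (Real.log (1 / p) - 1) / 2) ∂ν
        = (p / 2) * ∫ x in E, ‖Z x‖ ^ 2 ∂ν + (Real.log (1 / p) - 1) / 2 * p := by
      rw [integral_add ((hint2.const_mul (p / 2)).restrict) (integrable_const _),
        integral_const_mul, integral_const]
      simp [Measure.restrict_apply_univ, smul_eq_mul, mul_comm, hp, Measure.real]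
    have hsetle : ∫ x in E, ‖Z x‖ ^ 2 ∂ν ≤ 1 := by
      calc ∫ x in E, ‖Z x‖ ^ 2 ∂ν ≤ ∫ x, ‖Z x‖ ^ 2 ∂ν :=
            setIntegral_le_integral hint2 (ae_of_all _ fun x => sq_nonneg _)
        _ = 1 := hvar
    calc ∫ x in E, Real.log ‖Z x‖ ∂ν
        ≤ (p / 2) * ∫ x in E, ‖Z x‖ ^ 2 ∂ν + (Real.log (1 / p) - 1) / 2 * p := by
          rw [← hcomp]; exact step1
      _ ≤ p / 2 * Real.log (1 / p) := by nlinarith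
  · rw [integral_undef hint]
    positivity
end

section
/- Let Z be a complex Gaussian random variable with mean zero and E|Z|^2 = 1. Then for every measurable set E, ∫_E log⁻|Z| dν ≤ ν(E)·(log(1/ν(E)) + 1/4), where log⁻ t = max(−log t, 0). -/
open MeasureTheory Real

/-- For a standard complex Gaussian `Z` (with `Pr(|Z| ≤ s) = 1 - exp(-s²/2)`) with
mean zero, for every measurable set `E`,
`∫_E log⁻|Z| dν ≤ ν(E) (log(1/ν(E)) + 1/4)`, where `log⁻ t = max (−log t) 0`. -/
theorem stmt_1 {Ω : Type*} [MeasurableSpace Ω] (ν : Measure Ω) [IsProbabilityMeasure ν]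
    (Z : Ω → ℂ) (hZmeas : Measurable Z)
    (hmean : ∫ x, Z x ∂ν = 0)
    (hlaw : ∀ s : ℝ, 0 ≤ s → ν {x | ‖Z x‖ ≤ s} = ENNReal.ofReal (1 - Real.exp (-s ^ 2 / 2)))
    (E : Set Ω) (hE : MeasurableSet E) :
    ∫ x in E, max (-Real.log ‖Z x‖) 0 ∂ν
      ≤ (ν E).toReal * (Real.log (1 / (ν E).toReal) + 1 / 4) := by
  set g : Ω → ℝ := fun x => max (-Real.log ‖Z x‖) 0 with hgdef
  have hgmeas : Measurable g :=
    ((Real.measurable_log.comp hZmeas.norm).neg).max measurable_const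
  have hgnn : ∀ x, 0 ≤ g x := fun x => le_max_right _ _
  by_cases hE0 : ν E = 0
  · rw [Measure.restrict_eq_zero.mpr hE0, integral_zero_measure, hE0]
    simp
  · set p := (ν E).toReal with hpdef
    have hp0 : 0 < p := ENNReal.toReal_pos hE0 (measure_ne_top ν E)
    have hp1 : p ≤ 1 := by
      have h1 : ν E ≤ 1 := prob_le_one
      have := ENNReal.toReal_mono (by norm_num) h1
      simpa using this
    set a := Real.log (1 / p) with hadef
    have ha0 : 0 ≤ a := Real.log_nonneg (by rw [le_div_iff₀ hp0]; linarith)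
    have hmax_meas : Measurable fun x => max (g x - a) 0 :=
      (hgmeas.sub measurable_const).max measurable_const
    -- tail bound
    have tail : ∀ t : ℝ, t ∈ Set.Ioi (0 : ℝ) → ν {x | t < max (g x - a) 0}
        ≤ ENNReal.ofReal (Real.exp (-2 * a) / 2 * Real.exp (-2 * t)) := by
      intro t ht
      have ht0 : 0 < t := ht
      have hsub : {x | t < max (g x - a) 0} ⊆ {x | ‖Z x‖ ≤ Real.exp (-(a + t))} := by
        intro x hx
        simp only [Set.mem_setOf_eq] at hx ⊢
        have h1 : t < g x - a := by
          rcases lt_max_iff.mp hx with h | h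
          · exact h
          · linarith
        have h2 : a + t < -Real.log ‖Z x‖ := by
          have hg : a + t < g x := by linarith
          rcases lt_max_iff.mp hg with h | h
          · exact h
          · linarith
        rcases eq_or_lt_of_le (norm_nonneg (Z x)) with h0 | h0
        · rw [← h0]; exact (Real.exp_pos _).le
        · have hlt : Real.log ‖Z x‖ < -(a + t) := by linarith
          have := Real.exp_lt_exp.mpr hlt
          rw [Real.exp_log h0] at this
          exact this.le
      calc ν {x | t < max (g x - a) 0} ≤ ν {x | ‖Z x‖ ≤ Real.exp (-(a + t))} :=
            measure_mono hsub
        _ = ENNReal.ofReal (1 - Real.exp (-Real.exp (-(a + t)) ^ 2 / 2)) :=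
            hlaw _ (Real.exp_pos _).le
        _ ≤ ENNReal.ofReal (Real.exp (-2 * a) / 2 * Real.exp (-2 * t)) := by
            apply ENNReal.ofReal_le_ofReal
            have hu : Real.exp (-(a + t)) ^ 2 = Real.exp (-2 * a) * Real.exp (-2 * t) := by
              rw [sq, ← Real.exp_add, ← Real.exp_add]; ring_nf
            have key := Real.add_one_le_exp (-Real.exp (-(a + t)) ^ 2 / 2)
            have : 1 - Real.exp (-Real.exp (-(a + t)) ^ 2 / 2)
                ≤ Real.exp (-(a + t)) ^ 2 / 2 := by linarith
            calc 1 - Real.exp (-Real.exp (-(a + t)) ^ 2 / 2)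
                ≤ Real.exp (-(a + t)) ^ 2 / 2 := this
              _ = Real.exp (-2 * a) / 2 * Real.exp (-2 * t) := by rw [hu]; ring
    -- integral of the tail over (0, ∞)
    have hint : IntegrableOn (fun t : ℝ => Real.exp (-2 * a) / 2 * Real.exp (-2 * t))
        (Set.Ioi (0 : ℝ)) :=
      (exp_neg_integrableOn_Ioi 0 (by norm_num : (0:ℝ) < 2)).const_mul _
    have hval : ∫ t in Set.Ioi (0:ℝ), Real.exp (-2 * a) / 2 * Real.exp (-2 * t)
        = Real.exp (-2 * a) / 4 := by
      rw [MeasureTheory.integral_const_mul]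
      have h2 : ∫ t in Set.Ioi (0:ℝ), Real.exp (-2 * t) = 1 / 2 := by
        have := MeasureTheory.integral_comp_mul_left_Ioi (fun x => Real.exp (-x)) 0
          (by norm_num : (0:ℝ) < 2)
        simp only [mul_zero, neg_mul, smul_eq_mul] at this ⊢
        rw [this, integral_exp_neg_Ioi_zero]
        norm_num
      rw [h2]; ring
    have tail_int : ∫⁻ t in Set.Ioi (0:ℝ), ν {x | t < max (g x - a) 0}
        ≤ ENNReal.ofReal (Real.exp (-2 * a) / 4) := by
      calc ∫⁻ t in Set.Ioi (0:ℝ), ν {x | t < max (g x - a) 0}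
          ≤ ∫⁻ t in Set.Ioi (0:ℝ),
              ENNReal.ofReal (Real.exp (-2 * a) / 2 * Real.exp (-2 * t)) := by
            exact setLIntegral_mono
              (((measurable_id'.const_mul (-2)).exp.const_mul
                (Real.exp (-2 * a) / 2)).ennreal_ofReal) tail
        _ = ENNReal.ofReal (∫ t in Set.Ioi (0:ℝ),
              Real.exp (-2 * a) / 2 * Real.exp (-2 * t)) := by
            rw [← ofReal_integral_eq_lintegral_ofReal hint
              (Filter.Eventually.of_forall fun t =>
                mul_nonneg (by positivity) (Real.exp_pos _).le)]
        _ = ENNReal.ofReal (Real.exp (-2 * a) / 4) := by rw [hval]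
    -- layer cake
    have layer : ∫⁻ x, ENNReal.ofReal (max (g x - a) 0) ∂ν
        = ∫⁻ t in Set.Ioi (0:ℝ), ν {x | t < max (g x - a) 0} :=
      lintegral_eq_lintegral_meas_lt ν
        (Filter.Eventually.of_forall fun x => le_max_right _ _) hmax_meas.aemeasurable
    -- decomposition
    have step2 : ∫⁻ x in E, ENNReal.ofReal (g x) ∂ν
        ≤ ENNReal.ofReal a * ν E + ∫⁻ x, ENNReal.ofReal (max (g x - a) 0) ∂ν := by
      calc ∫⁻ x in E, ENNReal.ofReal (g x) ∂ν
          ≤ ∫⁻ x in E, (ENNReal.ofReal a + ENNReal.ofReal (max (g x - a) 0)) ∂ν := by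
            apply lintegral_mono
            intro x
            show ENNReal.ofReal (g x) ≤ ENNReal.ofReal a + ENNReal.ofReal (max (g x - a) 0)
            rw [← ENNReal.ofReal_add ha0 (le_max_right _ _)]
            exact ENNReal.ofReal_le_ofReal
              (by rcases le_total (g x) a with h | h
                  · linarith [le_max_right (g x - a) (0:ℝ)]
                  · linarith [le_max_left (g x - a) (0:ℝ)])
        _ = ENNReal.ofReal a * ν E + ∫⁻ x in E, ENNReal.ofReal (max (g x - a) 0) ∂ν := by
            rw [lintegral_add_left measurable_const, setLIntegral_const]
        _ ≤ ENNReal.ofReal a * ν E + ∫⁻ x, ENNReal.ofReal (max (g x - a) 0) ∂ν :=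
            add_le_add_right (setLIntegral_le_lintegral _ _) _
    -- assemble bound in ℝ≥0∞
    have hbound : ∫⁻ x in E, ENNReal.ofReal (g x) ∂ν
        ≤ ENNReal.ofReal (p * (Real.log (1 / p) + 1 / 4)) := by
      have hνE : ν E = ENNReal.ofReal p := (ENNReal.ofReal_toReal (measure_ne_top ν E)).symm
      have hfinal : a * p + Real.exp (-2 * a) / 4 ≤ p * (Real.log (1 / p) + 1 / 4) := by
        have hexp : Real.exp (-2 * a) = p ^ 2 := by
          rw [hadef, Real.log_div one_ne_zero (ne_of_gt hp0), Real.log_one]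
          rw [show (-2 : ℝ) * (0 - Real.log p) = 2 * Real.log p by ring]
          rw [show (2 : ℝ) * Real.log p = Real.log p + Real.log p by ring, Real.exp_add,
            Real.exp_log hp0, sq]
        rw [hexp, hadef]
        nlinarith [sq_nonneg p]
      calc ∫⁻ x in E, ENNReal.ofReal (g x) ∂ν
          ≤ ENNReal.ofReal a * ν E + ∫⁻ x, ENNReal.ofReal (max (g x - a) 0) ∂ν := step2
        _ ≤ ENNReal.ofReal a * ENNReal.ofReal p + ENNReal.ofReal (Real.exp (-2 * a) / 4) := by
            rw [hνE, layer]
            exact add_le_add_right tail_int _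
        _ = ENNReal.ofReal (a * p + Real.exp (-2 * a) / 4) := by
            rw [← ENNReal.ofReal_mul ha0, ← ENNReal.ofReal_add
              (mul_nonneg ha0 hp0.le) (by positivity)]
        _ ≤ ENNReal.ofReal (p * (Real.log (1 / p) + 1 / 4)) :=
            ENNReal.ofReal_le_ofReal hfinal
    -- back to Bochner integral
    have heq : ∫ x in E, g x ∂ν = (∫⁻ x in E, ENNReal.ofReal (g x) ∂ν).toReal := by
      rw [integral_eq_lintegral_of_nonneg_ae
        (Filter.Eventually.of_forall fun x => hgnn x)
        (hgmeas.aestronglyMeasurable)]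
    have hRnn : 0 ≤ p * (Real.log (1 / p) + 1 / 4) := by
      apply mul_nonneg hp0.le
      have : 0 ≤ Real.log (1 / p) := ha0
      linarith
    calc ∫ x in E, g x ∂ν = (∫⁻ x in E, ENNReal.ofReal (g x) ∂ν).toReal := heq
      _ ≤ p * (Real.log (1 / p) + 1 / 4) :=
          ENNReal.toReal_le_of_le_ofReal hRnn hbound
end
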